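/- arXiv:2405.17593 — 5 statements merged into one kernel-verified Lean document; each statement's English description precedes it below -/
import Mathlib

section
/- Let S be a Sylow p-subgroup of a normal subgroup N of a finite group H. If γ : H → G is a surjective homomorphism with kernel N such that every proper subgroup of H has proper image in G, then S is normal in H. -/
/-- Let `γ : H → G` be surjective with kernel `N`, with every proper
subgroup of `H` having proper image in `G`, and let `S` be a Sylow `p`-subgroup of
`N = ker γ`. Then `S` (as a subgroup of `H`) is normal in `H`. -/
theorem stmt_2 {H G : Type*} [Group H] [Finite H] [Group G]
    (γ : H →* G) (hsurj : Function.Surjective γ)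
    (hmin : ∀ K : Subgroup H, K < ⊤ → Subgroup.map γ K < ⊤)
    (p : ℕ) [Fact p.Prime] (S : Sylow p γ.ker) :
    (Subgroup.map γ.ker.subtype (S : Subgroup γ.ker)).Normal := by
  have hfrat := Sylow.normalizer_sup_eq_top (N := γ.ker) S
  rw [← Subgroup.normalizer_eq_top_iff]
  by_contra h
  have hlt : Subgroup.normalizer ((S.map γ.ker.subtype : Subgroup H) : Set H) < ⊤ := lt_top_iff_ne_top.mpr h
  have := hmin _ hlt
  have htop : Subgroup.map γ (Subgroup.normalizer ((S.map γ.ker.subtype : Subgroup H) : Set H) ⊔ γ.ker) = ⊤ := by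
    rw [hfrat]
    rwa [← MonoidHom.range_eq_map, MonoidHom.range_eq_top]
  rw [Subgroup.map_sup] at htop
  have hker : Subgroup.map γ γ.ker = ⊥ := by
    rw [eq_bot_iff]
    rintro x ⟨y, hy, rfl⟩
    simpa using hy
  rw [hker, sup_bot_eq] at htop
  exact absurd htop (ne_of_lt this)
end

section
/- Let H be a subdirect product of H₁ × H₂ with projections π₁, π₂, and let N be a soluble normal subgroup of H such that H/N ≅ T^ℓ for a finite nonabelian simple group T and positive integer ℓ. Then there exist integers ℓ₁, ℓ₂ ≥ 0 with ℓ₁ + ℓ₂ ≥ ℓ such that H₁/(Nπ₁) ≅ T^{ℓ₁} and H₂/(Nπ₂) ≅ T^{ℓ₂}. -/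
open Subgroup
open scoped commutatorElement

lemma simple_commutator_top {T : Type*} [Group T] (hT : IsSimpleGroup T)
    (hTna : ∃ a b : T, a * b ≠ b * a) (B : Subgroup T)
    (hB : ∀ g x : T, ⁅g, x⁆ ∈ B) : B = ⊤ := by
  have hc : commutator T = ⊤ := by
    rcases hT.eq_bot_or_eq_top_of_normal (commutator T) inferInstance with h | h
    · exfalso
      obtain ⟨a, b, hab⟩ := hTna
      have : ⁅a, b⁆ ∈ commutator T :=
        Subgroup.commutator_mem_commutator (Subgroup.mem_top a) (Subgroup.mem_top b)
      rw [h, Subgroup.mem_bot, commutatorElement_eq_one_iff_mul_comm] at this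
      exact hab this
    · exact h
  have hle : commutator T ≤ B := by
    rw [_root_.commutator_def, Subgroup.commutator_def]
    refine (Subgroup.closure_le _).mpr ?_
    rintro x ⟨g, -, y, -, rfl⟩
    exact hB g y
  rw [hc] at hle
  exact top_le_iff.mp hle

lemma mulSingle_mem_of_normal {ι : Type*} [Fintype ι] [DecidableEq ι] {T : Type*} [Group T]
    (hT : IsSimpleGroup T) (hTna : ∃ a b : T, a * b ≠ b * a)
    (A : Subgroup (ι → T)) (hA : A.Normal) (i : ι)
    (hi : ∃ a ∈ A, a i ≠ 1) (t : T) : (Pi.mulSingle i t : ι → T) ∈ A := by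
  have hproj : ∀ x : T, ∃ a ∈ A, a i = x := by
    have hsurj : Function.Surjective (Pi.evalMonoidHom (fun _ : ι => T) i) := by
      intro x
      exact ⟨(Pi.mulSingle i x : ι → T), by simp⟩
    have hmap : (Subgroup.map (Pi.evalMonoidHom (fun _ : ι => T) i) A) = ⊤ := by
      rcases hT.eq_bot_or_eq_top_of_normal _ (hA.map _ hsurj) with h | h
      · exfalso
        obtain ⟨a, haA, hai⟩ := hi
        have : a i ∈ Subgroup.map (Pi.evalMonoidHom (fun _ : ι => T) i) A :=
          ⟨a, haA, rfl⟩
        rw [h, Subgroup.mem_bot] at this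
        exact hai this
      · exact h
    intro x
    have : x ∈ Subgroup.map (Pi.evalMonoidHom (fun _ : ι => T) i) A := by
      rw [hmap]; trivial
    obtain ⟨a, ha, ha2⟩ := this
    exact ⟨a, ha, ha2⟩
  have key : (A.comap (MonoidHom.mulSingle (fun _ : ι => T) i)) = ⊤ := by
    apply simple_commutator_top hT hTna
    intro g x
    obtain ⟨a, haA, hai⟩ := hproj x
    have hmem : ⁅(Pi.mulSingle i g : ι → T), a⁆ ∈ A := by
      rw [commutatorElement_def]
      have h1 : (Pi.mulSingle i g : ι → T) * a * (Pi.mulSingle i g : ι → T)⁻¹ ∈ A :=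
        hA.conj_mem a haA _
      exact mul_mem h1 (inv_mem haA)
    have heq : ⁅(Pi.mulSingle i g : ι → T), a⁆ = (Pi.mulSingle i ⁅g, x⁆ : ι → T) := by
      funext j
      by_cases hji : j = i
      · subst hji
        simp [commutatorElement_def, Pi.mulSingle_eq_same, hai]
      · simp [commutatorElement_def, Pi.mulSingle_eq_of_ne hji]
    rw [heq] at hmem
    exact hmem
  have : t ∈ A.comap (MonoidHom.mulSingle (fun _ : ι => T) i) := by rw [key]; trivial
  exact this

lemma mem_of_support_sub {ι : Type*} [Fintype ι] [DecidableEq ι] {T : Type*} [Group T]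
    (hT : IsSimpleGroup T) (hTna : ∃ a b : T, a * b ≠ b * a)
    (A : Subgroup (ι → T)) (hA : A.Normal) (f : ι → T)
    (hf : ∀ i, f i ≠ 1 → ∃ a ∈ A, a i ≠ 1) : f ∈ A := by
  apply Subgroup.pi_mem_of_mulSingle_mem
  intro i
  by_cases h : f i = 1
  · rw [h]
    simp only [Pi.mulSingle_one]
    exact one_mem A
  · exact mulSingle_mem_of_normal hT hTna A hA i (hf i h) (f i)

lemma side {G G₁ T : Type*} [Group G] [Group G₁] [Group T]
    (hT : IsSimpleGroup T) (hTna : ∃ a b : T, a * b ≠ b * a)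
    (π : G →* G₁) (hs : Function.Surjective π)
    {ℓ : ℕ} (ψ : G →* (Fin ℓ → T)) (hψ : Function.Surjective ψ)
    (S : Finset (Fin ℓ)) (hS : ∀ i, i ∈ S ↔ ∃ a ∈ Subgroup.map ψ π.ker, a i ≠ 1) :
    ∃ φ : G₁ →* (Fin (Sᶜ.card) → T), Function.Surjective φ ∧ φ.ker = Subgroup.map π ψ.ker := by
  classical
  set A : Subgroup (Fin ℓ → T) := Subgroup.map ψ π.ker with hA
  have hAnorm : A.Normal := (MonoidHom.normal_ker π).map ψ hψ
  set e : Fin (Sᶜ.card) ≃ ↥(Sᶜ : Finset (Fin ℓ)) := (Finset.equivFin (Sᶜ)).symm with he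
  -- the restricted homomorphism
  set ρ : G →* (Fin (Sᶜ.card) → T) :=
    { toFun := fun h j => ψ h ↑(e j)
      map_one' := by funext j; simp
      map_mul' := by intro a b; funext j; simp } with hρ
  have hρ_apply : ∀ (h : G) (j : Fin (Sᶜ.card)), ρ h j = ψ h ↑(e j) := fun _ _ => rfl
  have hnotS : ∀ (j : Fin (Sᶜ.card)), (↑(e j) : Fin ℓ) ∉ S := by
    intro j
    exact Finset.mem_compl.mp (e j).2
  have hker_le : π.ker ≤ ρ.ker := by
    intro k hk
    have hmem : ψ k ∈ A := ⟨k, hk, rfl⟩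
    rw [MonoidHom.mem_ker]
    funext j
    by_contra hne
    exact hnotS j ((hS _).mpr ⟨ψ k, hmem, hne⟩)
  set φ : G₁ →* (Fin (Sᶜ.card) → T) := π.liftOfSurjective hs ⟨ρ, hker_le⟩ with hφ
  have hφπ : ∀ h : G, φ (π h) = ρ h := fun h =>
    π.liftOfRightInverse_comp_apply _ _ ⟨ρ, hker_le⟩ h
  refine ⟨φ, ?_, ?_⟩
  · -- surjectivity
    intro g
    set Gext : Fin ℓ → T := fun i => if h : i ∈ (Sᶜ : Finset (Fin ℓ)) then g (e.symm ⟨i, h⟩) else 1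
    obtain ⟨h, hh⟩ := hψ Gext
    refine ⟨π h, ?_⟩
    rw [hφπ]
    funext j
    rw [hρ_apply, hh]
    have hmem : (↑(e j) : Fin ℓ) ∈ (Sᶜ : Finset (Fin ℓ)) := (e j).2
    simp only [Gext, dif_pos hmem]
    congr 1
    rw [show (⟨↑(e j), hmem⟩ : ↥(Sᶜ : Finset (Fin ℓ))) = e j from Subtype.ext rfl]
    exact e.symm_apply_apply j
  · -- kernel
    ext x
    constructor
    · intro hx
      obtain ⟨h, rfl⟩ := hs x
      have hρh : ρ h = 1 := by rw [← hφπ]; exact hx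
      have hsupp : ∀ i : Fin ℓ, ψ h i ≠ 1 → ∃ a ∈ A, a i ≠ 1 := by
        intro i hi
        rw [← hS]
        by_contra hiS
        have hic : i ∈ (Sᶜ : Finset (Fin ℓ)) := Finset.mem_compl.mpr hiS
        have : ψ h ↑(e (e.symm ⟨i, hic⟩)) = 1 := by
          rw [← hρ_apply, hρh]; rfl
        rw [e.apply_symm_apply] at this
        exact hi this
      have hmemA : ψ h ∈ A := mem_of_support_sub hT hTna A hAnorm _ hsupp
      obtain ⟨k, hkK, hkeq⟩ := hmemA
      have hhk : h * k⁻¹ ∈ ψ.ker := by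
        rw [MonoidHom.mem_ker, map_mul, map_inv, hkeq, mul_inv_cancel]
      refine ⟨h * k⁻¹, hhk, ?_⟩
      rw [map_mul, map_inv, MonoidHom.mem_ker.mp hkK, inv_one, mul_one]
    · rintro ⟨n, hn, rfl⟩
      rw [MonoidHom.mem_ker, hφπ]
      have hn1 : ψ n = 1 := by simpa [MonoidHom.mem_ker] using hn
      funext j
      rw [hρ_apply, hn1]
      rfl

/-- Let `H ≤ H₁ × H₂` be a subdirect product with projections `π₁, π₂`,
and `N` a soluble normal subgroup of `H` with `H/N ≅ T^ℓ` for a finite nonabelian simple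
group `T` and `ℓ ≥ 1`. Then there are `ℓ₁, ℓ₂ ≥ 0` with `ℓ₁ + ℓ₂ ≥ ℓ` such that
`H₁/(Nπ₁) ≅ T^{ℓ₁}` and `H₂/(Nπ₂) ≅ T^{ℓ₂}` (expressed via surjective homomorphisms
`Hᵢ → T^{ℓᵢ}` with kernel exactly `Nπᵢ`). -/
theorem stmt_4 {H₁ H₂ T : Type*} [Group H₁] [Group H₂] [Group T] [Finite T]
    [Finite H₁] [Finite H₂]
    (hT : IsSimpleGroup T) (hTna : ∃ a b : T, a * b ≠ b * a)
    (H : Subgroup (H₁ × H₂))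
    (π₁ : ↥H →* H₁) (π₂ : ↥H →* H₂)
    (hπ₁ : π₁ = (MonoidHom.fst H₁ H₂).comp H.subtype)
    (hπ₂ : π₂ = (MonoidHom.snd H₁ H₂).comp H.subtype)
    (hs1 : Function.Surjective π₁) (hs2 : Function.Surjective π₂)
    (N : Subgroup ↥H) (hN : N.Normal) (hsol : IsSolvable N)
    (ℓ : ℕ) (hℓ : 1 ≤ ℓ)
    (ψ : ↥H →* (Fin ℓ → T)) (hψ : Function.Surjective ψ) (hkerψ : ψ.ker = N) :
    ∃ ℓ₁ ℓ₂ : ℕ, ℓ₁ + ℓ₂ ≥ ℓ ∧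
      (∃ φ₁ : H₁ →* (Fin ℓ₁ → T), Function.Surjective φ₁ ∧ φ₁.ker = Subgroup.map π₁ N) ∧
      (∃ φ₂ : H₂ →* (Fin ℓ₂ → T), Function.Surjective φ₂ ∧ φ₂.ker = Subgroup.map π₂ N) := by
    classical
  set A₁ : Subgroup (Fin ℓ → T) := Subgroup.map ψ π₁.ker with hA₁
  set A₂ : Subgroup (Fin ℓ → T) := Subgroup.map ψ π₂.ker with hA₂
  have hA₁norm : A₁.Normal := (MonoidHom.normal_ker π₁).map ψ hψ
  have hA₂norm : A₂.Normal := (MonoidHom.normal_ker π₂).map ψ hψ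
  set S₁ : Finset (Fin ℓ) := Finset.univ.filter (fun i => ∃ a ∈ A₁, a i ≠ 1) with hS₁def
  set S₂ : Finset (Fin ℓ) := Finset.univ.filter (fun i => ∃ a ∈ A₂, a i ≠ 1) with hS₂def
  have hS₁ : ∀ i, i ∈ S₁ ↔ ∃ a ∈ A₁, a i ≠ 1 := by intro i; simp [hS₁def]
  have hS₂ : ∀ i, i ∈ S₂ ↔ ∃ a ∈ A₂, a i ≠ 1 := by intro i; simp [hS₂def]
  -- elements of A₁ and A₂ commute
  have hcomm : ∀ x ∈ A₁, ∀ y ∈ A₂, x * y = y * x := by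
    rintro _ ⟨k, hk, rfl⟩ _ ⟨k', hk', rfl⟩
    rw [← map_mul, ← map_mul]
    congr 1
    have hk1 : (↑k : H₁ × H₂).1 = 1 := by
      have := MonoidHom.mem_ker.mp hk; rw [hπ₁] at this; exact this
    have hk2 : (↑k' : H₁ × H₂).2 = 1 := by
      have := MonoidHom.mem_ker.mp hk'; rw [hπ₂] at this; exact this
    apply Subtype.ext
    show (↑k : H₁ × H₂) * ↑k' = (↑k' : H₁ × H₂) * ↑k
    exact Prod.ext (by simp [Prod.fst_mul, hk1, hk2]) (by simp [Prod.snd_mul, hk1, hk2])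
  -- S₁ and S₂ are disjoint
  have hdisj : Disjoint S₁ S₂ := by
    rw [Finset.disjoint_left]
    intro i hi1 hi2
    obtain ⟨a, b, hab⟩ := hTna
    have h1 : (Pi.mulSingle i a : Fin ℓ → T) ∈ A₁ :=
      mulSingle_mem_of_normal hT ⟨a, b, hab⟩ A₁ hA₁norm i ((hS₁ i).mp hi1) a
    have h2 : (Pi.mulSingle i b : Fin ℓ → T) ∈ A₂ :=
      mulSingle_mem_of_normal hT ⟨a, b, hab⟩ A₂ hA₂norm i ((hS₂ i).mp hi2) b
    have := hcomm _ h1 _ h2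
    have heval := congrFun this i
    simp only [Pi.mul_apply, Pi.mulSingle_eq_same] at heval
    exact hab heval
  -- cardinality count
  have hcard : S₁ᶜ.card + S₂ᶜ.card ≥ ℓ := by
    have h1 : S₁ᶜ.card = ℓ - S₁.card := by
      rw [Finset.card_compl, Fintype.card_fin]
    have h2 : S₂ᶜ.card = ℓ - S₂.card := by
      rw [Finset.card_compl, Fintype.card_fin]
    have h3 : S₁.card + S₂.card ≤ ℓ := by
      rw [← Finset.card_union_of_disjoint hdisj]
      calc (S₁ ∪ S₂).card ≤ Fintype.card (Fin ℓ) := Finset.card_le_univ _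
        _ = ℓ := Fintype.card_fin ℓ
    have h4 : S₁.card ≤ ℓ := le_trans (Nat.le_add_right _ _) h3
    omega
  obtain ⟨φ₁, hsurj₁, hker₁⟩ := side hT hTna π₁ hs1 ψ hψ S₁ hS₁
  obtain ⟨φ₂, hsurj₂, hker₂⟩ := side hT hTna π₂ hs2 ψ hψ S₂ hS₂
  rw [hkerψ] at hker₁ hker₂
  exact ⟨S₁ᶜ.card, S₂ᶜ.card, hcard, ⟨φ₁, hsurj₁, hker₁⟩, ⟨φ₂, hsurj₂, hker₂⟩⟩
end

section
/- Let H be a subdirect product of H₁ × ⋯ × H_r with projections π_i : H → H_i, and let N be a soluble normal subgroup of H with H/N ≅ T^ℓ for a finite nonabelian simple group T and positive integer ℓ. Then there exist nonnegative integers ℓ₁, …, ℓ_r with ℓ₁ + ⋯ + ℓ_r ≥ ℓ such that H_i/(Nπ_i) ≅ T^{ℓ_i} for all 1 ≤ i ≤ r. -/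
open Subgroup

private lemma aux_not_solvable {T : Type*} [Group T] (hT : IsSimpleGroup T)
    (hTna : ∃ a b : T, a * b ≠ b * a) : ¬ IsSolvable T := by
  haveI := hT
  intro h
  obtain ⟨a, b, hab⟩ := hTna
  exact hab (IsSimpleGroup.comm_iff_isSolvable.mpr h a b)

/-- A normal subgroup of a power of a nonabelian simple group that has a nontrivial
coordinate contains the whole corresponding factor. -/
private lemma aux_single_mem {ι : Type*} [DecidableEq ι] {T : Type*} [Group T]
    (hT : IsSimpleGroup T) (hTna : ∃ a b : T, a * b ≠ b * a)
    (K : Subgroup (ι → T)) (hK : K.Normal) {j : ι} {k : ι → T}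
    (hk : k ∈ K) (hkj : k j ≠ 1) : ∀ t : T, Pi.mulSingle j t ∈ K := by
  haveI := hT
  -- find an element not commuting with `k j`
  have hex : ∃ g : T, g * k j * g⁻¹ * (k j)⁻¹ ≠ 1 := by
    by_contra hcon
    push_neg at hcon
    have hcen : k j ∈ Subgroup.center T := by
      rw [Subgroup.mem_center_iff]
      intro g
      have h1 : g * k j * g⁻¹ = k j := by
        have := hcon g
        rwa [mul_inv_eq_one] at this
      conv_rhs => rw [← h1]
      group
    haveI : (Subgroup.center T).Normal := inferInstance
    rcases this.eq_bot_or_eq_top with hb | ht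
    · rw [hb, Subgroup.mem_bot] at hcen
      exact hkj hcen
    · obtain ⟨a, b, hab⟩ := hTna
      have : a ∈ Subgroup.center T := by rw [ht]; trivial
      exact hab ((Subgroup.mem_center_iff.mp this b).symm)
  obtain ⟨g, hg⟩ := hex
  -- the commutator of `mulSingle j g` with `k` lies in `K` and is a `mulSingle`
  have hceq : Pi.mulSingle j g * k * (Pi.mulSingle j g)⁻¹ * k⁻¹
      = Pi.mulSingle j (g * k j * g⁻¹ * (k j)⁻¹) := by
    funext j'
    by_cases hj : j' = j
    · subst hj
      simp [Pi.mul_apply, Pi.inv_apply]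
    · simp [Pi.mul_apply, Pi.inv_apply, Pi.mulSingle_eq_of_ne hj]
  have hcK : Pi.mulSingle j (g * k j * g⁻¹ * (k j)⁻¹) ∈ K := by
    rw [← hceq]
    exact K.mul_mem (hK.conj_mem k hk _) (K.inv_mem hk)
  -- the comap under the single-coordinate embedding is a nontrivial normal subgroup
  set W : Subgroup T := K.comap (MonoidHom.mulSingle (fun _ : ι => T) j) with hW
  have hWn : W.Normal := by
    constructor
    intro t ht s
    have heq : (Pi.mulSingle j s * Pi.mulSingle j t * (Pi.mulSingle j s)⁻¹ : ι → T)
        = Pi.mulSingle j (s * t * s⁻¹) := by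
      rw [← Pi.mulSingle_inv, ← Pi.mulSingle_mul, ← Pi.mulSingle_mul]
    have htK : Pi.mulSingle j t ∈ K := ht
    have : Pi.mulSingle j (s * t * s⁻¹) ∈ K := heq ▸ hK.conj_mem _ htK _
    exact this
  rcases hWn.eq_bot_or_eq_top with hb | htop
  · exfalso
    have : g * k j * g⁻¹ * (k j)⁻¹ ∈ W := hcK
    rw [hb, Subgroup.mem_bot] at this
    exact hg this
  · intro t
    have : t ∈ W := by rw [htop]; trivial
    exact this

/-- If a group is covered by normal subgroups `A i` (times a solvable normal `N`)
whose intersection is trivial, it is solvable. -/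
private lemma aux_cover {G : Type*} [Group G] {ι : Type*} [Fintype ι]
    (N : Subgroup G) (hsolN : IsSolvable N)
    (A : ι → Subgroup G) (hA : ∀ i, (A i).Normal)
    (hsup : ∀ i, ∀ g : G, ∃ a ∈ A i, ∃ n ∈ N, g = a * n)
    (hinf : ∀ g : G, (∀ i, g ∈ A i) → g = 1) : IsSolvable G := by
  have key : ∀ i, ∃ d, derivedSeries G d ≤ A i := by
    intro i
    haveI := hA i
    haveI : Group.IsSolvable N := hsolN
    have hsurj : Function.Surjective ((QuotientGroup.mk' (A i)).comp N.subtype) := by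
      intro q
      obtain ⟨g, rfl⟩ := QuotientGroup.mk'_surjective (A i) q
      obtain ⟨a, ha, n, hn, rfl⟩ := hsup i g
      refine ⟨⟨n, hn⟩, ?_⟩
      show ((n : G) : G ⧸ A i) = ((a * n : G) : G ⧸ A i)
      have h1 : ((a : G) : G ⧸ A i) = 1 := (QuotientGroup.eq_one_iff a).mpr ha
      rw [QuotientGroup.mk_mul, h1, one_mul]
    haveI hq : Group.IsSolvable (G ⧸ A i) := solvable_of_surjective hsurj
    obtain ⟨dq, hdq⟩ := hq
    refine ⟨dq, ?_⟩
    have hmap := map_derivedSeries_eq (QuotientGroup.mk'_surjective (A i)) dq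
    rw [hdq] at hmap
    have := (Subgroup.map_eq_bot_iff _).mp hmap
    rwa [QuotientGroup.ker_mk'] at this
  choose d hd using key
  have hmono : ∀ n, derivedSeries G (n + 1) ≤ derivedSeries G n := by
    intro n
    haveI := derivedSeries_normal G n
    exact Subgroup.commutator_le_left _ _
  have hmono' : ∀ {n m : ℕ}, n ≤ m → derivedSeries G m ≤ derivedSeries G n := by
    intro n m h
    induction h with
    | refl => exact le_rfl
    | step _ ih => exact (hmono _).trans ih
  refine ⟨Finset.univ.sup d, ?_⟩
  rw [eq_bot_iff]
  intro x hx
  rw [Subgroup.mem_bot]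
  exact hinf x fun i => hd i (hmono' (Finset.le_sup (Finset.mem_univ i)) hx)

/-- Let `H ≤ H₁ × ⋯ × H_r` be a subdirect product with projections
`π_i`, and `N` a soluble normal subgroup of `H` with `H/N ≅ T^ℓ` for a finite nonabelian
simple group `T` and `ℓ ≥ 1`. Then there are nonnegative integers `ℓ₁, …, ℓ_r` with
`ℓ₁ + ⋯ + ℓ_r ≥ ℓ` such that `H_i/(Nπ_i) ≅ T^{ℓ_i}` for all `i` (expressed via
surjective homomorphisms `H_i → T^{ℓ_i}` with kernel exactly `Nπ_i`). -/
theorem stmt_5 {r : ℕ} {Hs : Fin r → Type*} [∀ i, Group (Hs i)] [∀ i, Finite (Hs i)]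
    {T : Type*} [Group T] [Finite T]
    (hT : IsSimpleGroup T) (hTna : ∃ a b : T, a * b ≠ b * a)
    (H : Subgroup (∀ i, Hs i))
    (π : ∀ i, ↥H →* Hs i)
    (hπ : ∀ i, π i = (Pi.evalMonoidHom Hs i).comp H.subtype)
    (hs : ∀ i, Function.Surjective (π i))
    (N : Subgroup ↥H) (hN : N.Normal) (hsol : IsSolvable N)
    (ℓ : ℕ) (hℓ : 1 ≤ ℓ)
    (ψ : ↥H →* (Fin ℓ → T)) (hψ : Function.Surjective ψ) (hkerψ : ψ.ker = N) :
    ∃ ℓs : Fin r → ℕ, ℓ ≤ ∑ i, ℓs i ∧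
      ∀ i, ∃ φ : Hs i →* (Fin (ℓs i) → T),
        Function.Surjective φ ∧ φ.ker = Subgroup.map (π i) N := by
  classical
  have hπ' : ∀ i (h : ↥H), π i h = (h : ∀ i, Hs i) i := by
    intro i h; rw [hπ i]; rfl
  set M : Fin r → Subgroup ↥H := fun i => (π i).ker with hM
  set K : Fin r → Subgroup (Fin ℓ → T) := fun i => (M i).map ψ with hKdef
  have hKn : ∀ i, (K i).Normal := fun i => ((π i).normal_ker).map ψ hψ
  set C : Fin r → Finset (Fin ℓ) :=
    fun i => Finset.univ.filter (fun j => ∀ k ∈ K i, k j = 1) with hC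
  refine ⟨fun i => (C i).card, ?_, ?_⟩
  · -- the sum bound
    have hcover : ∀ j : Fin ℓ, ∃ i, j ∈ C i := by
      intro j
      by_contra hcon
      push_neg at hcon
      have hall : ∀ i, ∀ t : T, Pi.mulSingle j t ∈ K i := by
        intro i
        have hex : ∃ k ∈ K i, k j ≠ 1 := by
          by_contra h2
          push_neg at h2
          exact hcon i (Finset.mem_filter.mpr ⟨Finset.mem_univ _, h2⟩)
        obtain ⟨k, hk, hkj⟩ := hex
        exact aux_single_mem hT hTna (K i) (hKn i) hk hkj
      set F : Subgroup (Fin ℓ → T) := Subgroup.pi ({j}ᶜ) (fun _ => ⊥) with hF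
      set Q : Subgroup ↥H := F.comap ψ with hQ
      have hNQ : N ≤ Q := by
        intro n hn
        have h1 : ψ n = 1 := by rw [← MonoidHom.mem_ker, hkerψ]; exact hn
        show ψ n ∈ F
        rw [h1]; exact F.one_mem
      -- ψ maps Q onto the j-th factor
      let θ : ↥Q →* T := (Pi.evalMonoidHom (fun _ => T) j).comp (ψ.comp Q.subtype)
      have hθ : Function.Surjective θ := by
        intro t
        obtain ⟨h, hh⟩ := hψ (Pi.mulSingle (M := fun _ : Fin ℓ => T) j t)
        have hhQ : h ∈ Q := by
          show ψ h ∈ F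
          rw [hh]
          rw [Subgroup.mem_pi]
          intro j' hj'
          have hj : j' ≠ j := by simpa using hj'
          rw [Subgroup.mem_bot]
          exact Pi.mulSingle_eq_of_ne (M := fun _ : Fin ℓ => T) hj t
        refine ⟨⟨h, hhQ⟩, ?_⟩
        show ψ h j = t
        rw [hh]
        exact Pi.mulSingle_eq_same (M := fun _ : Fin ℓ => T) j t
      -- Q is solvable by the covering lemma
      haveI hQsol : Group.IsSolvable ↥Q := by
        apply aux_cover (N.subgroupOf Q) ?_ (fun i => (M i).subgroupOf Q)
            (fun i => ((π i).normal_ker).subgroupOf Q) ?_ ?_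
        · haveI : Group.IsSolvable N := hsol
          exact solvable_of_surjective (f := (subgroupOfEquivOfLe hNQ).symm.toMonoidHom)
            (subgroupOfEquivOfLe hNQ).symm.surjective
        · intro i q
          have hqK : ψ (q : ↥H) ∈ K i := by
            have hqF : ψ (q : ↥H) ∈ F := q.2
            have hsingle : ψ (q : ↥H) = Pi.mulSingle j (ψ (q : ↥H) j) := by
              funext j'
              by_cases hj : j' = j
              · subst hj; rw [Pi.mulSingle_eq_same]
              · rw [Pi.mulSingle_eq_of_ne hj]
                have := (Subgroup.mem_pi _).mp hqF j' (by simpa using hj)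
                rwa [Subgroup.mem_bot] at this
            rw [hsingle]
            exact hall i _
          obtain ⟨m, hm, hmψ⟩ := hqK
          have hn : m⁻¹ * (q : ↥H) ∈ N := by
            rw [← hkerψ]
            show ψ (m⁻¹ * (q : ↥H)) = 1
            rw [map_mul, map_inv, hmψ]
            group
          have hmQ : m ∈ Q := by
            have hmrw : m = (q : ↥H) * (m⁻¹ * (q : ↥H))⁻¹ := by group
            rw [hmrw]
            exact Q.mul_mem q.2 (Q.inv_mem (hNQ hn))
          refine ⟨⟨m, hmQ⟩, Subgroup.mem_subgroupOf.mpr hm,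
            ⟨m⁻¹ * (q : ↥H), Q.mul_mem (Q.inv_mem hmQ) q.2⟩,
            Subgroup.mem_subgroupOf.mpr hn, ?_⟩
          apply Subtype.ext
          show (q : ↥H) = m * (m⁻¹ * (q : ↥H))
          group
        · intro q hq
          have hcoord : ∀ i, π i (q : ↥H) = 1 := fun i => Subgroup.mem_subgroupOf.mp (hq i)
          have hq1 : (q : ↥H) = 1 := by
            apply Subtype.ext
            funext i
            have := hcoord i
            rw [hπ'] at this
            exact this
          exact Subtype.ext hq1
      exact aux_not_solvable hT hTna (solvable_of_surjective hθ)
    have hsub : (Finset.univ : Finset (Fin ℓ)) ⊆ Finset.univ.biUnion C := by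
      intro j _
      obtain ⟨i, hi⟩ := hcover j
      exact Finset.mem_biUnion.mpr ⟨i, Finset.mem_univ i, hi⟩
    calc ℓ = (Finset.univ : Finset (Fin ℓ)).card := by simp
      _ ≤ (Finset.univ.biUnion C).card := Finset.card_le_card hsub
      _ ≤ ∑ i, (C i).card := Finset.card_biUnion_le
  · -- the homomorphisms
    intro i
    set e := (C i).orderIsoOfFin rfl with he
    let P : (Fin ℓ → T) →* (Fin (C i).card → T) :=
      { toFun := fun x n => x (e n),
        map_one' := rfl,
        map_mul' := fun _ _ => rfl }
    let g : ↥H →* (Fin (C i).card → T) := P.comp ψ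
    have hgsurj : Function.Surjective g := by
      intro y
      obtain ⟨h, hh⟩ := hψ (fun j => if hj : j ∈ C i then y (e.symm ⟨j, hj⟩) else 1)
      refine ⟨h, ?_⟩
      funext n
      show (ψ h) ((e n : { x // x ∈ C i }) : Fin ℓ) = y n
      rw [hh]
      have hmem : ((e n : { x // x ∈ C i }) : Fin ℓ) ∈ C i := (e n).2
      simp only [dif_pos hmem]
      exact congrArg y (e.symm_apply_apply n)
    have hMg : M i ≤ g.ker := by
      intro m hm
      have hmem : ψ m ∈ K i := Subgroup.mem_map_of_mem ψ hm
      show P (ψ m) = 1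
      funext n
      show (ψ m) ((e n : { x // x ∈ C i }) : Fin ℓ) = 1
      have hjC : ((e n : { x // x ∈ C i }) : Fin ℓ) ∈ C i := (e n).2
      exact (Finset.mem_filter.mp hjC).2 _ hmem
    let φ : Hs i →* (Fin (C i).card → T) :=
      (π i).liftOfRightInverse (Function.surjInv (hs i))
        (Function.rightInverse_surjInv (hs i)) ⟨g, hMg⟩
    have hφπ : ∀ h : ↥H, φ (π i h) = g h := fun h =>
      (π i).liftOfRightInverse_comp_apply _ _ ⟨g, hMg⟩ h
    refine ⟨φ, ?_, ?_⟩
    · intro y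
      obtain ⟨h, rfl⟩ := hgsurj y
      exact ⟨π i h, hφπ h⟩
    · ext x
      constructor
      · intro hx
        obtain ⟨h, rfl⟩ := hs i x
        have hg1 : g h = 1 := by
          rw [← hφπ h]; exact hx
        have hsupp : ∀ j ∈ C i, ψ h j = 1 := by
          intro j hj
          have := congrFun hg1 (e.symm ⟨j, hj⟩)
          have h2 : (ψ h) ((e (e.symm ⟨j, hj⟩) : { x // x ∈ C i }) : Fin ℓ) = 1 := this
          rwa [e.apply_symm_apply] at h2
        have hψK : ψ h ∈ K i := by
          rw [← Finset.noncommProd_mulSingle (ψ h)]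
          apply Subgroup.noncommProd_mem
          intro j _
          by_cases hj : j ∈ C i
          · rw [hsupp j hj]
            rw [Pi.mulSingle_one]
            exact (K i).one_mem
          · have hex : ∃ k ∈ K i, k j ≠ 1 := by
              by_contra h2
              push_neg at h2
              exact hj (Finset.mem_filter.mpr ⟨Finset.mem_univ _, h2⟩)
            obtain ⟨k, hk, hkj⟩ := hex
            exact aux_single_mem hT hTna (K i) (hKn i) hk hkj _
        obtain ⟨m, hm, hmψ⟩ := hψK
        have hn : m⁻¹ * h ∈ N := by
          rw [← hkerψ]
          show ψ (m⁻¹ * h) = 1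
          rw [map_mul, map_inv, hmψ]
          group
        refine Subgroup.mem_map.mpr ⟨m⁻¹ * h, hn, ?_⟩
        rw [map_mul, map_inv]
        have hm1 : π i m = 1 := hm
        rw [hm1]
        simp
      · intro hx
        obtain ⟨n, hn, rfl⟩ := Subgroup.mem_map.mp hx
        show φ (π i n) = 1
        rw [hφπ]
        show P (ψ n) = 1
        have h1 : ψ n = 1 := by rw [← MonoidHom.mem_ker, hkerψ]; exact hn
        rw [h1, map_one]
end

section
/- Let r be a prime and R a finite nonabelian r-group all of whose proper characteristic subgroups are cyclic and central. Then R has center cyclic of order r or 4, R/Z(R) is elementary abelian, and the commutator map induces a nondegenerate-up-to-radical alternating form on R/Z(R) over 𝔽_r; in particular R is of symplectic type (extraspecial, or a central product of an extraspecial 2-group with a cyclic group of order 4). -/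
/-- An extraspecial `p`-group: a `p`-group whose center has order `p`, equals the derived
subgroup, and whose central quotient is elementary abelian (exponent `p`). -/
def IsExtraspecial (p : ℕ) (R : Type*) [Group R] : Prop :=
  IsPGroup p R ∧ Nat.card (Subgroup.center R) = p ∧ Subgroup.center R = commutator R ∧
    ∀ x : R ⧸ Subgroup.center R, x ^ p = 1

/-- A `p`-group of symplectic type: extraspecial, or (for `p = 2`) a central product of an
extraspecial `2`-group with a cyclic group of order `4`. -/
def IsSymplecticType (p : ℕ) (R : Type*) [Group R] : Prop :=
  IsExtraspecial p R ∨
    (p = 2 ∧ IsCyclic (Subgroup.center R) ∧ Nat.card (Subgroup.center R) = 4 ∧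
      ∃ E : Subgroup R, IsExtraspecial 2 ↥E ∧ E ⊔ Subgroup.center R = ⊤)

open scoped commutatorElement

open Subgroup

section Aux
variable {G : Type*} [Group G]

private lemma swap_aux (b c : G) : b * c = ⁅b, c⁆ * (c * b) := by
  rw [commutatorElement_def]; group

private lemma pow_swap_aux (x y : G) (hc : ∀ g : G, Commute g ⁅y, x⁆) (n : ℕ) :
    y ^ n * x = ⁅y, x⁆ ^ n * (x * y ^ n) := by
  induction n with
  | zero => simp
  | succ n ih =>
    calc y ^ (n + 1) * x = y * (y ^ n * x) := by rw [pow_succ']; group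
      _ = y * (⁅y, x⁆ ^ n * (x * y ^ n)) := by rw [ih]
      _ = (y * ⁅y, x⁆ ^ n) * (x * y ^ n) := by rw [mul_assoc]
      _ = (⁅y, x⁆ ^ n * y) * (x * y ^ n) := by rw [((hc y).pow_right n).eq]
      _ = ⁅y, x⁆ ^ n * ((y * x) * y ^ n) := by group
      _ = ⁅y, x⁆ ^ n * ((⁅y, x⁆ * (x * y)) * y ^ n) := by rw [← swap_aux]
      _ = ⁅y, x⁆ ^ (n + 1) * (x * y ^ (n + 1)) := by rw [pow_succ, pow_succ]; group

private lemma comm_pow_aux (x y : G) (hc : ∀ g : G, Commute g ⁅x, y⁆) (n : ℕ) :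
    ⁅x ^ n, y⁆ = ⁅x, y⁆ ^ n := by
  have h := pow_swap_aux y x hc n
  rw [commutatorElement_def, h]
  group

private lemma mul_pow_aux (x y : G) (hc : ∀ g : G, Commute g ⁅y, x⁆) (n : ℕ) :
    (x * y) ^ n = ⁅y, x⁆ ^ (n.choose 2) * (x ^ n * y ^ n) := by
  induction n with
  | zero => simp
  | succ n ih =>
    have hch : (n + 1).choose 2 = n.choose 2 + n := by
      rw [Nat.choose_succ_succ, Nat.choose_one_right, Nat.add_comm]
    calc (x * y) ^ (n + 1) = (x * y) ^ n * (x * y) := pow_succ _ _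
      _ = ⁅y, x⁆ ^ (n.choose 2) * (x ^ n * y ^ n) * (x * y) := by rw [ih]
      _ = ⁅y, x⁆ ^ (n.choose 2) * (x ^ n * ((y ^ n * x) * y)) := by group
      _ = ⁅y, x⁆ ^ (n.choose 2) * (x ^ n * ((⁅y, x⁆ ^ n * (x * y ^ n)) * y)) := by
            rw [pow_swap_aux x y hc n]
      _ = ⁅y, x⁆ ^ (n.choose 2) * ((x ^ n * ⁅y, x⁆ ^ n) * ((x * y ^ n) * y)) := by group
      _ = ⁅y, x⁆ ^ (n.choose 2) * ((⁅y, x⁆ ^ n * x ^ n) * ((x * y ^ n) * y)) := by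
            rw [(((hc x).pow_right n).pow_left n).eq]
      _ = ⁅y, x⁆ ^ ((n + 1).choose 2) * (x ^ (n + 1) * y ^ (n + 1)) := by
            rw [hch, pow_add, pow_succ, pow_succ]; group

private lemma card_dvd_of_cyclic_exp [Finite G] (H : Subgroup G) (hcyc : IsCyclic ↥H)
    (n : ℕ) (hexp : ∀ x ∈ H, x ^ n = 1) : Nat.card ↥H ∣ n := by
  obtain ⟨g, hg⟩ := hcyc.exists_generator
  have hcard : Nat.card ↥H = orderOf g := (orderOf_eq_card_of_forall_mem_zpowers hg).symm
  rw [hcard]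
  exact orderOf_dvd_of_pow_eq_one (Subtype.ext (by
    push_cast
    exact hexp (g : G) g.2))

private lemma exists_compl (W : Type*) [CommGroup W] [Finite W] (hW : ∀ w : W, w * w = 1)
    (L : Subgroup W) : ∃ U : Subgroup W, U ⊓ L = ⊥ ∧ U ⊔ L = ⊤ := by
  haveI : Finite (Subgroup W) :=
    Finite.of_injective (fun H : Subgroup W => (H : Set W)) SetLike.coe_injective
  obtain ⟨U, hUs, hUmax⟩ := Set.Finite.exists_maximalFor id {U : Subgroup W | U ⊓ L = ⊥}
    (Set.toFinite _) ⟨⊥, by simp⟩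
  refine ⟨U, hUs, ?_⟩
  by_contra htop
  obtain ⟨w, hw⟩ : ∃ w : W, w ∉ U ⊔ L := by
    by_contra h; push_neg at h
    exact htop (eq_top_iff.mpr fun x _ => h x)
  have hwU : w ∉ U := fun h => hw (Subgroup.mem_sup_left h)
  have hw2 : w ^ (2 : ℤ) = 1 := by
    rw [show (2 : ℤ) = 1 + 1 from rfl, zpow_add, zpow_one]; exact hW w
  have hnew : (U ⊔ Subgroup.zpowers w) ⊓ L = ⊥ := by
    rw [eq_bot_iff]
    rintro g ⟨hg1, hg2⟩
    obtain ⟨u, hu, v, hv, rfl⟩ := Subgroup.mem_sup.mp hg1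
    rcases Subgroup.mem_zpowers_iff.mp hv with ⟨k, rfl⟩
    rcases Int.even_or_odd k with ⟨m, hm⟩ | ⟨m, hm⟩
    · have h1 : w ^ k = 1 := by rw [hm, zpow_add]; exact hW _
      have h2 : u ∈ U ⊓ L := ⟨hu, by simpa [h1] using hg2⟩
      rw [hUs] at h2
      simp only [Subgroup.mem_bot] at h2 ⊢
      rw [h1, h2, one_mul]
    · exfalso
      have h1 : w ^ k = w := by
        rw [hm, zpow_add, zpow_mul, hw2, one_zpow, one_mul, zpow_one]
      apply hw
      have : u⁻¹ * (u * w ^ k) ∈ U ⊔ L :=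
        mul_mem (Subgroup.mem_sup_left (inv_mem hu)) (Subgroup.mem_sup_right hg2)
      rwa [h1, inv_mul_cancel_left] at this
  have heq := hUmax hnew (le_sup_left : U ≤ U ⊔ Subgroup.zpowers w)
  apply hwU
  exact heq (Subgroup.mem_sup_right (Subgroup.mem_zpowers w))

end Aux

/-- Let `r` be a prime and `R` a finite nonabelian `r`-group all of whose
proper characteristic subgroups are cyclic and central. Then `Z(R)` is cyclic of order `r`
or `4`, `R/Z(R)` is elementary abelian (so commutators are central and of order dividing
`r`, giving the alternating commutator form on `R/Z(R)` over `𝔽_r`), and `R` is of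
symplectic type. -/
theorem stmt_9 (r : ℕ) (hr : r.Prime) (R : Type*) [Group R] [Finite R]
    (hp : IsPGroup r R) (hna : ∃ a b : R, a * b ≠ b * a)
    (hchar : ∀ C : Subgroup R, C.Characteristic → C < ⊤ →
      IsCyclic ↥C ∧ C ≤ Subgroup.center R) :
    (IsCyclic (Subgroup.center R) ∧
      (Nat.card (Subgroup.center R) = r ∨ Nat.card (Subgroup.center R) = 4)) ∧
    (∀ x y : R, ⁅x, y⁆ ∈ Subgroup.center R) ∧
    (∀ x : R ⧸ Subgroup.center R, x ^ r = 1) ∧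
    (∀ x y : R, ⁅x, y⁆ ^ r = 1) ∧
    IsSymplecticType r R := by
  haveI := Fact.mk hr
  obtain ⟨a, b, hab⟩ := hna
  -- the verbal subgroup generated by r-th powers and commutators
  set sset : Set R := {g : R | (∃ x : R, x ^ r = g) ∨ ∃ x y : R, ⁅x, y⁆ = g} with hsset
  set S : Subgroup R := Subgroup.closure sset with hS
  have hSchar : S.Characteristic := by
    rw [Subgroup.characteristic_iff_map_le]
    intro φ
    rw [hS, MonoidHom.map_closure]
    apply Subgroup.closure_mono
    rintro g ⟨g', (⟨x, rfl⟩ | ⟨x, y, rfl⟩), rfl⟩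
    · exact Or.inl ⟨φ x, (map_pow φ.toMonoidHom x r).symm⟩
    · exact Or.inr ⟨φ x, φ y, (map_commutatorElement φ.toMonoidHom x y).symm⟩
  -- S is proper
  have hStop : S ≠ ⊤ := by
    intro htop
    set Q := Abelianization R with hQ
    have hofsurj : Function.Surjective (Abelianization.of : R →* Q) := fun q =>
      Quotient.inductionOn' q fun x => ⟨x, rfl⟩
    haveI : Finite Q := Finite.of_surjective _ hofsurj
    set pw : Q →* Q := powMonoidHom r with hpw
    have hmap : Subgroup.map Abelianization.of S ≤ pw.range := by
      rw [hS, MonoidHom.map_closure, Subgroup.closure_le]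
      rintro q ⟨g, (⟨x, rfl⟩ | ⟨x, y, rfl⟩), rfl⟩
      · exact ⟨Abelianization.of x, (map_pow Abelianization.of x r).symm⟩
      · have : Abelianization.of ⁅x, y⁆ = 1 := (QuotientGroup.eq_one_iff _).mpr
          (Subgroup.commutator_mem_commutator (Subgroup.mem_top x) (Subgroup.mem_top y))
        rw [this]; exact one_mem _
    have hrange : pw.range = ⊤ := by
      rw [eq_top_iff]
      intro q _
      obtain ⟨x, rfl⟩ := hofsurj q
      exact hmap ⟨x, by rw [htop]; exact Subgroup.mem_top x, rfl⟩
    have hsurj : Function.Surjective pw := MonoidHom.range_eq_top.mp hrange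
    have hinj : Function.Injective pw := Finite.injective_iff_surjective.mpr hsurj
    have hinj' : ∀ q : Q, q ^ r = 1 → q = 1 := fun q hq => hinj (by
      simpa [hpw, powMonoidHom_apply] using hq)
    have hQp : IsPGroup r Q := IsPGroup.of_surjective hp Abelianization.of hofsurj
    have htriv : ∀ q : Q, q = 1 := by
      have key : ∀ k : ℕ, ∀ q : Q, q ^ (r ^ k) = 1 → q = 1 := by
        intro k
        induction k with
        | zero => intro q hq; simpa using hq
        | succ k ih =>
          intro q hq
          apply ih
          apply hinj'
          rw [← pow_mul, ← pow_succ]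
          exact hq
      intro q
      obtain ⟨k, hk⟩ := hQp q
      exact key k q hk
    have hcommtop : commutator R = ⊤ := by
      rw [eq_top_iff]
      intro x _
      exact (QuotientGroup.eq_one_iff x).mp (htriv (Abelianization.of x))
    haveI := hp.isNilpotent
    haveI : Group.IsSolvable R := inferInstance
    have hds : ∀ n, derivedSeries R n = ⊤ := by
      intro n
      induction n with
      | zero => rfl
      | succ n ih => rw [derivedSeries_succ, ih, ← _root_.commutator_def, hcommtop]
    obtain ⟨n, hn⟩ := (inferInstance : Group.IsSolvable R).solvable
    have : a ∈ (⊥ : Subgroup R) := by rw [← hn, hds n]; exact Subgroup.mem_top a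
    rw [Subgroup.mem_bot] at this
    apply hab
    rw [this, one_mul, mul_one]
  obtain ⟨-, hSle⟩ := hchar S hSchar (lt_top_iff_ne_top.mpr hStop)
  have hxr : ∀ x : R, x ^ r ∈ Subgroup.center R := fun x =>
    hSle (Subgroup.subset_closure (Or.inl ⟨x, rfl⟩))
  have hcomm2 : ∀ x y : R, ⁅x, y⁆ ∈ Subgroup.center R := fun x y =>
    hSle (Subgroup.subset_closure (Or.inr ⟨x, y, rfl⟩))
  have hC : ∀ x y g : R, Commute g ⁅x, y⁆ := fun x y g =>
    Subgroup.mem_center_iff.mp (hcomm2 x y) g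
  -- commutators have order dividing r
  have hcomm4 : ∀ x y : R, ⁅x, y⁆ ^ r = 1 := by
    intro x y
    rw [← comm_pow_aux x y (hC x y)]
    rw [commutatorElement_eq_one_iff_mul_comm]
    exact (Subgroup.mem_center_iff.mp (hxr x) y).symm
  -- R/Z has exponent r
  have hquot3 : ∀ x : R ⧸ Subgroup.center R, x ^ r = 1 := by
    intro x
    refine QuotientGroup.induction_on x fun z => ?_
    have : ((z ^ r : R) : R ⧸ Subgroup.center R) = 1 := (QuotientGroup.eq_one_iff _).mpr (hxr z)
    simpa using this
  -- the center is proper and cyclic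
  have hZne : Subgroup.center R ≠ ⊤ := by
    intro h
    apply hab
    exact (Subgroup.mem_center_iff.mp (h ▸ Subgroup.mem_top a) b).symm
  obtain ⟨hZcyc, -⟩ := hchar (Subgroup.center R) Subgroup.centerCharacteristic
    (lt_top_iff_ne_top.mpr hZne)
  -- the derived subgroup: central, nontrivial, of order r
  have hDZ : commutator R ≤ Subgroup.center R := by
    rw [_root_.commutator_def, Subgroup.commutator_le]
    exact fun x _ y _ => hcomm2 x y
  have hDr : ∀ d ∈ commutator R, d ^ r = 1 := by
    set Ω : Subgroup R :=
      { carrier := {g : R | g ∈ Subgroup.center R ∧ g ^ r = 1}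
        one_mem' := ⟨Subgroup.one_mem _, one_pow r⟩
        mul_mem' := by
          rintro g h ⟨hg1, hg2⟩ ⟨hh1, hh2⟩
          refine ⟨Subgroup.mul_mem _ hg1 hh1, ?_⟩
          have hcomm : Commute g h := (Subgroup.mem_center_iff.mp hg1 h).symm
          rw [hcomm.mul_pow, hg2, hh2, one_mul]
        inv_mem' := by
          rintro g ⟨hg1, hg2⟩
          exact ⟨Subgroup.inv_mem _ hg1, by rw [inv_pow, hg2, inv_one]⟩ } with hΩ
    have hDΩ : commutator R ≤ Ω := by
      rw [_root_.commutator_def, Subgroup.commutator_le]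
      exact fun x _ y _ => ⟨hcomm2 x y, hcomm4 x y⟩
    exact fun d hd => (hDΩ hd).2
  have hDbot : commutator R ≠ ⊥ := by
    intro h
    apply hab
    have hm : ⁅a, b⁆ ∈ commutator R :=
      Subgroup.commutator_mem_commutator (Subgroup.mem_top a) (Subgroup.mem_top b)
    rw [h, Subgroup.mem_bot] at hm
    exact commutatorElement_eq_one_iff_mul_comm.mp hm
  haveI := hZcyc
  have hDcyc : IsCyclic ↥(commutator R) :=
    isCyclic_of_surjective _ (Subgroup.subgroupOfEquivOfLe hDZ).surjective
  have hcardD : Nat.card ↥(commutator R) = r := by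
    have hdvd := card_dvd_of_cyclic_exp (commutator R) hDcyc r hDr
    rcases (Nat.Prime.eq_one_or_self_of_dvd hr _ hdvd) with h1 | h
    · exact absurd (Subgroup.card_eq_one.mp h1) hDbot
    · exact h
  have hZbot : Subgroup.center R ≠ ⊥ := by
    intro h
    exact hDbot (le_bot_iff.mp (h ▸ hDZ))
  rcases hr.eq_two_or_odd' with hr2 | hodd
  · -- r = 2
    subst hr2
    set f₂ : R →* Abelianization R := (powMonoidHom 2).comp Abelianization.of with hf₂
    have hker₂ : ∀ x : R, x ∈ f₂.ker ↔ x ^ 2 ∈ commutator R := by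
      intro x
      rw [MonoidHom.mem_ker, hf₂, MonoidHom.comp_apply, powMonoidHom_apply, ← map_pow]
      exact QuotientGroup.eq_one_iff _
    have hKchar : f₂.ker.Characteristic := by
      rw [Subgroup.characteristic_iff_comap_le]
      intro φ x hx
      rw [Subgroup.mem_comap] at hx
      rw [hker₂] at hx ⊢
      have h1 : φ (x ^ 2) ∈ commutator R := by rw [map_pow]; exact hx
      have h2 := Subgroup.characteristic_iff_comap_eq.mp
        (inferInstance : (commutator R).Characteristic) φ
      rw [← h2, Subgroup.mem_comap]
      exact h1
    by_cases hKtop : f₂.ker = ⊤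
    · have hx2 : ∀ x : R, x ^ 2 ∈ commutator R := fun x =>
        (hker₂ x).mp (hKtop ▸ Subgroup.mem_top x)
      have hZ4 : ∀ z ∈ Subgroup.center R, z ^ 4 = 1 := by
        intro z _
        have h4 : (4 : ℕ) = 2 * 2 := by norm_num
        rw [h4, pow_mul]
        exact hDr _ (hx2 z)
      have hdvd : Nat.card ↥(Subgroup.center R) ∣ 4 :=
        card_dvd_of_cyclic_exp _ hZcyc 4 hZ4
      have hne1 : Nat.card ↥(Subgroup.center R) ≠ 1 := fun h =>
        hZbot (Subgroup.card_eq_one.mp h)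
      have hcases : Nat.card ↥(Subgroup.center R) = 2 ∨ Nat.card ↥(Subgroup.center R) = 4 := by
        have hdvd' : Nat.card ↥(Subgroup.center R) ∣ 2 ^ 2 := by norm_num; exact hdvd
        obtain ⟨k, hk2, hkeq⟩ := (Nat.dvd_prime_pow Nat.prime_two).mp hdvd'
        interval_cases k
        · rw [pow_zero] at hkeq; exact absurd hkeq hne1
        · left; rw [hkeq]; norm_num
        · right; rw [hkeq]; norm_num
      rcases hcases with hcard2 | hcard4
      · have hZD : Subgroup.center R = commutator R :=
          (Subgroup.eq_of_le_of_card_ge hDZ (by rw [hcardD, hcard2])).symm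
        exact ⟨⟨hZcyc, Or.inl hcard2⟩, hcomm2, hquot3, hcomm4,
          Or.inl ⟨hp, hcard2, hZD, hquot3⟩⟩
      · -- |Z| = 4 : central product case
        have hofsurj : Function.Surjective (Abelianization.of : R →* Abelianization R) :=
          fun q => Quotient.inductionOn' q fun x => ⟨x, rfl⟩
        haveI : Finite (Abelianization R) := Finite.of_surjective _ hofsurj
        have hW2 : ∀ w : Abelianization R, w * w = 1 := by
          intro w
          obtain ⟨x, rfl⟩ := hofsurj w
          rw [← map_mul, ← pow_two]
          exact (QuotientGroup.eq_one_iff _).mpr (hx2 x)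
        obtain ⟨U, hUL, hULtop⟩ := exists_compl (Abelianization R) hW2
          ((Subgroup.center R).map Abelianization.of)
        set E : Subgroup R := U.comap Abelianization.of with hE
        have hDE : commutator R ≤ E := by
          intro d hd
          rw [hE, Subgroup.mem_comap]
          have h1 : Abelianization.of d = 1 := (QuotientGroup.eq_one_iff _).mpr hd
          rw [h1]; exact one_mem U
        have hsup : E ⊔ Subgroup.center R = ⊤ := by
          rw [eq_top_iff]
          intro x _
          have hx : Abelianization.of x ∈ U ⊔ (Subgroup.center R).map Abelianization.of := by
            rw [hULtop]; exact Subgroup.mem_top _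
          obtain ⟨u, hu, l, hl, hul⟩ := Subgroup.mem_sup.mp hx
          obtain ⟨z, hz, rfl⟩ := hl
          have hxz : x * z⁻¹ ∈ E := by
            rw [hE, Subgroup.mem_comap, map_mul, map_inv]
            have h1 : Abelianization.of x = u * Abelianization.of z := hul.symm
            rw [h1, mul_inv_cancel_right]
            exact hu
          have h2 : x = (x * z⁻¹) * z := by group
          rw [h2]
          exact mul_mem (Subgroup.mem_sup_left hxz) (Subgroup.mem_sup_right hz)
        have hEZ : ∀ x : R, x ∈ E → x ∈ Subgroup.center R → x ∈ commutator R := by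
          intro x hxE hxZ
          have h1 : Abelianization.of x ∈ U ⊓ (Subgroup.center R).map Abelianization.of :=
            ⟨hxE, Subgroup.mem_map_of_mem _ hxZ⟩
          rw [hUL, Subgroup.mem_bot] at h1
          exact (QuotientGroup.eq_one_iff _).mp h1
        have hcentE : ∀ x : R, (∀ e, e ∈ E → e * x = x * e) → x ∈ Subgroup.center R := by
          intro x hx
          have h1 : E ≤ Subgroup.centralizer {x} := by
            intro e he
            rw [Subgroup.mem_centralizer_iff]
            rintro g hg
            rw [Set.mem_singleton_iff] at hg
            rw [hg]
            exact (hx e he).symm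
          have h2 : Subgroup.center R ≤ Subgroup.centralizer {x} := by
            intro z hz
            rw [Subgroup.mem_centralizer_iff]
            rintro g hg
            rw [Set.mem_singleton_iff] at hg
            rw [hg]
            exact Subgroup.mem_center_iff.mp hz x
          have h3 : (⊤ : Subgroup R) ≤ Subgroup.centralizer {x} := by
            rw [← hsup]; exact sup_le h1 h2
          rw [Subgroup.mem_center_iff]
          intro g
          exact (Subgroup.mem_centralizer_iff.mp (h3 (Subgroup.mem_top g)) x rfl).symm
        have hEnonab : ∃ e f : ↥E, e * f ≠ f * e := by
          by_contra h
          push_neg at h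
          have hEZ' : E ≤ Subgroup.center R := by
            intro x hxE
            apply hcentE x
            intro e he
            exact congrArg Subtype.val (h ⟨e, he⟩ ⟨x, hxE⟩)
          apply hZne
          rw [eq_top_iff, ← hsup]
          exact sup_le hEZ' le_rfl
        have hcenterE : Subgroup.center ↥E = (commutator R).subgroupOf E := by
          ext x
          constructor
          · intro hx
            rw [Subgroup.mem_subgroupOf]
            apply hEZ _ x.2
            apply hcentE
            intro e he
            exact congrArg Subtype.val (Subgroup.mem_center_iff.mp hx ⟨e, he⟩)
          · intro hx
            rw [Subgroup.mem_subgroupOf] at hx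
            rw [Subgroup.mem_center_iff]
            intro g
            exact Subtype.ext (Subgroup.mem_center_iff.mp (hDZ hx) (g : R))
        have hcardcE : Nat.card ↥(Subgroup.center ↥E) = 2 := by
          rw [hcenterE, Nat.card_congr (Subgroup.subgroupOfEquivOfLe hDE).toEquiv]
          exact hcardD
        have hcommE_le : commutator ↥E ≤ Subgroup.center ↥E := by
          rw [_root_.commutator_def, Subgroup.commutator_le]
          intro g₁ _ g₂ _
          rw [hcenterE, Subgroup.mem_subgroupOf]
          have h1 : ((⁅g₁, g₂⁆ : ↥E) : R) = ⁅(g₁ : R), (g₂ : R)⁆ :=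
            map_commutatorElement E.subtype g₁ g₂
          rw [h1]
          exact Subgroup.commutator_mem_commutator (Subgroup.mem_top _) (Subgroup.mem_top _)
        have hcommE_ne : commutator ↥E ≠ ⊥ := by
          obtain ⟨e, f, hef⟩ := hEnonab
          intro h
          have hm : ⁅e, f⁆ ∈ commutator ↥E :=
            Subgroup.commutator_mem_commutator (Subgroup.mem_top e) (Subgroup.mem_top f)
          rw [h, Subgroup.mem_bot] at hm
          exact hef (commutatorElement_eq_one_iff_mul_comm.mp hm)
        have hcECE : Subgroup.center ↥E = commutator ↥E := by
          have hdvd := Subgroup.card_dvd_of_le hcommE_le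
          rw [hcardcE] at hdvd
          rcases Nat.Prime.eq_one_or_self_of_dvd Nat.prime_two _ hdvd with h1 | h2
          · exact absurd (Subgroup.card_eq_one.mp h1) hcommE_ne
          · exact (Subgroup.eq_of_le_of_card_ge hcommE_le (by rw [hcardcE, h2])).symm
        have hquotE : ∀ x : ↥E ⧸ Subgroup.center ↥E, x ^ 2 = 1 := by
          intro x
          refine QuotientGroup.induction_on x fun e => ?_
          have he2 : e ^ 2 ∈ Subgroup.center ↥E := by
            rw [hcenterE, Subgroup.mem_subgroupOf]
            have h1 : ((e ^ 2 : ↥E) : R) = (e : R) ^ 2 := SubmonoidClass.coe_pow e 2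
            rw [h1]
            exact hx2 (e : R)
          have h2 : ((e ^ 2 : ↥E) : ↥E ⧸ Subgroup.center ↥E) = 1 :=
            (QuotientGroup.eq_one_iff _).mpr he2
          simpa using h2
        exact ⟨⟨hZcyc, Or.inr hcard4⟩, hcomm2, hquot3, hcomm4,
          Or.inr ⟨rfl, hZcyc, hcard4, E, ⟨hp.to_subgroup E, hcardcE, hcECE, hquotE⟩, hsup⟩⟩
    · exfalso
      obtain ⟨-, hKle⟩ := hchar f₂.ker hKchar (lt_top_iff_ne_top.mpr hKtop)
      set cod : Subgroup (Abelianization R) := (Subgroup.center R).map Abelianization.of with hcod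
      have hcyccod : IsCyclic ↥cod := by
        have hg : Function.Surjective
            ((Abelianization.of.comp (Subgroup.center R).subtype).codRestrict cod
              (fun z => Subgroup.mem_map_of_mem _ z.2)) := by
          rintro ⟨q, hq⟩
          obtain ⟨z, hz, rfl⟩ := hq
          exact ⟨⟨z, hz⟩, rfl⟩
        exact isCyclic_of_surjective _ hg
      haveI := hcyccod
      set f₂' : R →* ↥cod := f₂.codRestrict cod (fun x => by
        have h1 : f₂ x = Abelianization.of (x ^ 2) := by
          rw [hf₂, MonoidHom.comp_apply, powMonoidHom_apply, map_pow]
        rw [h1]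
        exact Subgroup.mem_map_of_mem _ (hxr x)) with hf₂'
      have := commutative_of_cyclic_center_quotient f₂' (by
        rw [hf₂', MonoidHom.ker_codRestrict]; exact hKle)
      exact hab (this a b)
  · -- odd case
    have hrne2 : r ≠ 2 := by rintro rfl; exact absurd hodd (by decide)
    have hr2lt : 2 < r := lt_of_le_of_ne hr.two_le (Ne.symm hrne2)
    have hcr : ∀ x y : R, ⁅y, x⁆ ^ (r.choose 2) = 1 := by
      intro x y
      obtain ⟨m, hm⟩ := hr.dvd_choose_self (by norm_num) hr2lt
      rw [hm, pow_mul, hcomm4 y x, one_pow]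
    set f : R →* R :=
      { toFun := fun x => x ^ r
        map_one' := one_pow r
        map_mul' := fun x y => by
          show (x * y) ^ r = x ^ r * y ^ r
          rw [mul_pow_aux x y (hC y x) r, hcr x y, one_mul] } with hf
    have hfker : ∀ x : R, x ∈ f.ker ↔ x ^ r = 1 := fun x => Iff.rfl
    have hKchar : f.ker.Characteristic := by
      rw [Subgroup.characteristic_iff_comap_le]
      intro φ x hx
      rw [Subgroup.mem_comap] at hx
      rw [hfker] at hx ⊢
      have : φ (x ^ r) = 1 := by rw [map_pow]; exact hx
      exact φ.injective (by rw [this, map_one])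
    by_cases hKtop : f.ker = ⊤
    · -- exponent r: extraspecial
      have hallr : ∀ x : R, x ^ r = 1 := fun x => (hfker x).mp (hKtop ▸ Subgroup.mem_top x)
      have hcardZ : Nat.card ↥(Subgroup.center R) = r := by
        have hdvd := card_dvd_of_cyclic_exp (Subgroup.center R) hZcyc r fun x _ => hallr x
        rcases (Nat.Prime.eq_one_or_self_of_dvd hr _ hdvd) with h1 | h
        · exact absurd (Subgroup.card_eq_one.mp h1) hZbot
        · exact h
      have hZD : Subgroup.center R = commutator R :=
        (Subgroup.eq_of_le_of_card_ge hDZ (by rw [hcardD, hcardZ])).symm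
      exact ⟨⟨hZcyc, Or.inl hcardZ⟩, hcomm2, hquot3, hcomm4,
        Or.inl ⟨hp, hcardZ, hZD, hquot3⟩⟩
    · exfalso
      obtain ⟨-, hKle⟩ := hchar f.ker hKchar (lt_top_iff_ne_top.mpr hKtop)
      set f' : R →* ↥(Subgroup.center R) := f.codRestrict (Subgroup.center R) hxr with hf'
      have := commutative_of_cyclic_center_quotient f' (by
        rw [hf', MonoidHom.ker_codRestrict]; exact hKle)
      exact hab (this a b)
end

section
/- Let H ≤ H₁ × H₂ be a subdirect product with projections π₁, π₂ and kernels K₁ = ker π₁, K₂ = ker π₂, and let N be a normal subgroup of H. Suppose γ : H → H/N is the quotient map and that every proper subgroup of H has proper image under γ. Then for i ∈ {1,2}, every proper subgroup X < H/K_i has proper image in (H/K_i)/(NK_i/K_i) under the induced quotient map. -/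
lemma helper_min {G G' : Type*} [Group G] [Group G'] (f : G →* G')
    (hf : Function.Surjective f) (N : Subgroup G) [N.Normal]
    (hmin : ∀ X : Subgroup G, X < ⊤ → Subgroup.map (QuotientGroup.mk' N) X < ⊤)
    [(N.map f).Normal] :
    ∀ X : Subgroup G', X < ⊤ →
      Subgroup.map (QuotientGroup.mk' (N.map f)) X < ⊤ := by
  intro X hX
  rw [lt_top_iff_ne_top]
  intro htop
  have hY : X.comap f < ⊤ := by
    rw [lt_top_iff_ne_top]
    intro h
    apply hX.ne
    rw [eq_top_iff]
    rintro g' -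
    obtain ⟨g, rfl⟩ := hf g'
    have : g ∈ X.comap f := by rw [h]; trivial
    exact this
  have hmin' := hmin _ hY
  rw [lt_top_iff_ne_top] at hmin'
  apply hmin'
  rw [eq_top_iff]
  rintro q -
  obtain ⟨g, rfl⟩ := QuotientGroup.mk'_surjective N q
  have hq : QuotientGroup.mk' (N.map f) (f g) ∈
      Subgroup.map (QuotientGroup.mk' (N.map f)) X := by rw [htop]; trivial
  obtain ⟨x, hx, hxg⟩ := hq
  have hmem : x⁻¹ * f g ∈ N.map f := by
    rwa [QuotientGroup.mk'_apply, QuotientGroup.mk'_apply, QuotientGroup.eq] at hxg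
  obtain ⟨n, hn, hfn⟩ := hmem
  refine ⟨g * n⁻¹, ?_, ?_⟩
  · have : f (g * n⁻¹) = x := by
      rw [map_mul, map_inv, hfn]
      group
    simpa [Subgroup.mem_comap, this] using hx
  · rw [QuotientGroup.mk'_apply, QuotientGroup.mk'_apply, QuotientGroup.eq]
    simpa using hn

/-- Let `H ≤ H₁ × H₂` be a subdirect product with projections
`π₁, π₂` and kernels `K₁, K₂`, and let `N ⊴ H`. If every proper subgroup of `H` has
proper image in `H/N`, then for `i ∈ {1,2}` every proper subgroup of `H/K_i ≅ H_i` has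
proper image under the quotient map `H_i → H_i/(NK_i/K_i) = H_i/(Nπ_i)`. -/
theorem stmt_19 {H₁ H₂ : Type*} [Group H₁] [Group H₂] (H : Subgroup (H₁ × H₂))
    (hs1 : Function.Surjective ((MonoidHom.fst H₁ H₂).comp H.subtype))
    (hs2 : Function.Surjective ((MonoidHom.snd H₁ H₂).comp H.subtype))
    (N : Subgroup ↥H) [N.Normal]
    (hmin : ∀ X : Subgroup ↥H, X < ⊤ → Subgroup.map (QuotientGroup.mk' N) X < ⊤)
    [h1 : (Subgroup.map ((MonoidHom.fst H₁ H₂).comp H.subtype) N).Normal]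
    [h2 : (Subgroup.map ((MonoidHom.snd H₁ H₂).comp H.subtype) N).Normal] :
    (∀ X : Subgroup H₁, X < ⊤ →
      Subgroup.map (QuotientGroup.mk' (Subgroup.map ((MonoidHom.fst H₁ H₂).comp H.subtype) N)) X < ⊤) ∧
    (∀ X : Subgroup H₂, X < ⊤ →
      Subgroup.map (QuotientGroup.mk' (Subgroup.map ((MonoidHom.snd H₁ H₂).comp H.subtype) N)) X < ⊤) := by
  exact ⟨helper_min _ hs1 N hmin, helper_min _ hs2 N hmin⟩
end
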